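/- arXiv:2108.00823 — 4 statements merged into one kernel-verified Lean document; each statement's English description precedes it below -/
import Mathlib

section
/- Let G be a finite group and H a normal subgroup of G. Then d(G) ≥ d(H) + d(G/H), where d(K) denotes the small Davenport constant of a finite group K, i.e., the maximal length of a sequence over K admitting no nonempty subsequence whose terms can be ordered so that their product is the identity. -/
/-- A multiset `S` over a group is a *product-one sequence* if its terms can be
ordered so that their product is the identity. -/
def IsProductOne {G : Type*} [Group G] (S : Multiset G) : Prop :=
  ∃ l : List G, (l : Multiset G) = S ∧ l.prod = 1

/-- A multiset is *product-one free* if no nonempty sub-multiset is product-one. -/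
def ProductOneFree {G : Type*} [Group G] (S : Multiset G) : Prop :=
  ∀ T : Multiset G, T ≤ S → T ≠ 0 → ¬ IsProductOne T

/-- The small Davenport constant `d(G)`. -/
noncomputable def smallDavenport (G : Type*) [Group G] : ℕ :=
  sSup {k : ℕ | ∃ S : Multiset G, Multiset.card S = k ∧ ProductOneFree S}

lemma filter_ne_one_prod {M : Type*} [Monoid M] [DecidableEq M] (l : List M) :
    (l.filter (· ≠ 1)).prod = l.prod := by
  induction l with
  | nil => simp
  | cons a t ih =>
    by_cases h : a = 1
    · subst h; simpa [List.filter_cons] using ih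
    · simp only [ne_eq, decide_not] at ih
      simp [List.filter_cons, h, ih]

lemma aux_block {G : Type*} [Group G] {S : Multiset G} (hS : ProductOneFree S)
    {l : List G} (hlS : (l : Multiset G) = S) {i j : ℕ} (hij : i < j) (hj : j ≤ l.length)
    (heq : (l.take i).prod = (l.take j).prod) : False := by
  set m := (l.drop i).take (j - i) with hm
  have htake : l.take j = l.take i ++ m := by
    rw [hm, ← List.take_add]
    congr 1
    omega
  have hmprod : m.prod = 1 := by
    have h1 := congrArg List.prod htake
    rw [List.prod_append, ← heq] at h1
    have := mul_left_cancel (a := (l.take i).prod) (b := 1) (c := m.prod)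
      (by rw [mul_one]; exact h1)
    exact this.symm
  have hmne : m ≠ [] := by
    have hlenm : m.length = j - i := by
      rw [hm, List.length_take, List.length_drop]
      omega
    intro hnil
    rw [hnil] at hlenm
    simp at hlenm
    omega
  have hsub : (m : Multiset G) ≤ S := by
    rw [← hlS]
    exact Multiset.coe_le.mpr ((((l.drop i).take_sublist _).trans (l.drop_sublist i)).subperm)
  exact hS m hsub (by simpa using hmne) ⟨m, rfl, hmprod⟩

lemma card_le_of_productOneFree {G : Type*} [Group G] [Finite G]
    {S : Multiset G} (hS : ProductOneFree S) : Multiset.card S ≤ Nat.card G := by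
  by_contra h
  push_neg at h
  set l := S.toList with hl
  have hlS : (l : Multiset G) = S := S.coe_toList
  have hlen : Nat.card G < l.length := by
    rwa [← Multiset.coe_card, hlS]
  letI : Fintype G := Fintype.ofFinite G
  have hcard : Fintype.card G < Fintype.card (Fin (l.length + 1)) := by
    simp only [Fintype.card_fin]
    rw [Nat.card_eq_fintype_card] at hlen
    omega
  obtain ⟨i, j, hij, hfeq⟩ :=
    Fintype.exists_ne_map_eq_of_card_lt (fun i : Fin (l.length + 1) => (l.take i).prod) hcard
  rcases lt_or_gt_of_ne (fun h => hij (Fin.ext h) : (i : ℕ) ≠ j) with hlt | hlt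
  · exact aux_block hS hlS hlt (by omega) hfeq
  · exact aux_block hS hlS hlt (by omega) hfeq.symm

lemma davenport_mem {G : Type*} [Group G] [Finite G] :
    ∃ S : Multiset G, Multiset.card S = smallDavenport G ∧ ProductOneFree S := by
  have hne : ({k : ℕ | ∃ S : Multiset G, Multiset.card S = k ∧ ProductOneFree S}).Nonempty :=
    ⟨0, 0, by simp, fun T hT hTne _ => hTne (Multiset.le_zero.mp hT)⟩
  have hbdd : BddAbove {k : ℕ | ∃ S : Multiset G, Multiset.card S = k ∧ ProductOneFree S} :=
    ⟨Nat.card G, fun k ⟨S, hc, hf⟩ => hc ▸ card_le_of_productOneFree hf⟩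
  obtain ⟨S, hc, hf⟩ := Nat.sSup_mem hne hbdd
  exact ⟨S, hc, hf⟩

theorem stmt_0 (G : Type*) [Group G] [Finite G] (H : Subgroup G) [H.Normal] :
    smallDavenport H + smallDavenport (G ⧸ H) ≤ smallDavenport G := by
  classical
  obtain ⟨S, hScard, hSfree⟩ := davenport_mem (G := H)
  obtain ⟨T, hTcard, hTfree⟩ := davenport_mem (G := G ⧸ H)
  set φ : G →* G ⧸ H := QuotientGroup.mk' H with hφ
  -- 1 is not in T
  have h1T : (1 : G ⧸ H) ∉ T := by
    intro h1
    exact hTfree {1} (Multiset.singleton_le.mpr h1) (by simp) ⟨[1], rfl, by simp⟩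
  set A : Multiset G := S.map (fun h : H => (h : G)) with hA
  set B : Multiset G := T.map (fun q : G ⧸ H => q.out) with hB
  have hAmem : ∀ g ∈ A, g ∈ H := by
    intro g hg
    rw [hA] at hg
    obtain ⟨h, _, rfl⟩ := Multiset.mem_map.mp hg
    exact h.2
  have hBmem : ∀ g ∈ B, g ∉ H := by
    intro g hg hgH
    rw [hB] at hg
    obtain ⟨q, hq, rfl⟩ := Multiset.mem_map.mp hg
    have : φ q.out = 1 := (QuotientGroup.eq_one_iff _).mpr hgH
    rw [hφ, QuotientGroup.mk'_apply, QuotientGroup.out_eq'] at this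
    rw [this] at hq
    exact h1T hq
  have hBimg : B.map φ = T := by
    rw [hB, Multiset.map_map]
    have : (φ ∘ fun q : G ⧸ H => q.out) = id := by
      funext q
      simp [hφ, QuotientGroup.mk'_apply, QuotientGroup.out_eq']
    rw [this, Multiset.map_id]
  have hfree : ProductOneFree (A + B) := by
    intro V hV hVne ⟨l, hlV, hlprod⟩
    by_cases hall : ∀ g ∈ l, g ∈ H
    · -- all elements lie in H
      set l' : List H := l.pmap (fun g hg => (⟨g, hg⟩ : H)) hall with hl'
      have hl'map : l'.map (fun h : H => (h : G)) = l := by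
        rw [hl', List.map_pmap]
        simp
      have hl'V : ((l'.map (fun h : H => (h : G)) : List G) : Multiset G) = V := by
        rw [hl'map, hlV]
      have hVA : V ≤ A := by
        have hVfil : V.filter (· ∈ H) = V :=
          Multiset.filter_eq_self.mpr (by
            intro g hg
            rw [← hlV] at hg
            exact hall g (by simpa using hg))
        have hAfil : A.filter (· ∈ H) = A := Multiset.filter_eq_self.mpr hAmem
        have hBfil : B.filter (· ∈ H) = 0 := Multiset.filter_eq_nil.mpr hBmem
        calc V = V.filter (· ∈ H) := hVfil.symm
          _ ≤ (A + B).filter (· ∈ H) := Multiset.filter_le_filter _ hV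
          _ = A := by rw [Multiset.filter_add, hAfil, hBfil, add_zero]
      have hWle : (l' : Multiset H) ≤ S := by
        have hinj : Function.Injective (fun h : H => (h : G)) := Subtype.coe_injective
        refine (Multiset.map_le_map_iff hinj).mp ?_
        rw [Multiset.map_coe, hl'V]
        exact hVA
      have hl'ne : l' ≠ [] := by
        intro hnil
        apply hVne
        rw [← hlV, ← hl'map, hnil]
        simp
      have hl'prod : l'.prod = 1 := by
        apply Subtype.coe_injective
        show ((l'.prod : H) : G) = ((1 : H) : G)
        rw [SubmonoidClass.coe_list_prod, hl'map, hlprod, OneMemClass.coe_one]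
      exact hSfree l' hWle (by simpa using hl'ne) ⟨l', rfl, hl'prod⟩
    · -- some element is not in H
      push_neg at hall
      obtain ⟨g, hgl, hgH⟩ := hall
      set m : List (G ⧸ H) := (l.map φ).filter (· ≠ 1) with hmdef
      have hmprod : m.prod = 1 := by
        rw [hmdef, filter_ne_one_prod, List.prod_hom l φ, hlprod, map_one]
      have hmne : m ≠ [] := by
        have : φ g ∈ m := by
          rw [hmdef, List.mem_filter]
          refine ⟨List.mem_map_of_mem (f := φ) hgl, ?_⟩
          simp only [decide_eq_true_eq]
          intro h1
          exact hgH ((QuotientGroup.eq_one_iff g).mp h1)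
        intro hnil
        rw [hnil] at this
        exact List.not_mem_nil this
      have hmle : (m : Multiset (G ⧸ H)) ≤ T := by
        have h1 : (↑(l.map φ) : Multiset (G ⧸ H)) = V.map φ := by
          rw [← hlV, Multiset.map_coe]
        have h2 : V.map φ ≤ A.map φ + B.map φ := by
          rw [← Multiset.map_add]
          exact Multiset.map_le_map hV
        have hAimg : (A.map φ).filter (· ≠ 1) = 0 := by
          rw [Multiset.filter_eq_nil]
          intro q hq
          obtain ⟨a, ha, rfl⟩ := Multiset.mem_map.mp hq
          simp only [ne_eq, decide_not, Bool.not_eq_true', decide_eq_false_iff_not, not_not]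
          exact (QuotientGroup.eq_one_iff a).mpr (hAmem a ha)
        calc (m : Multiset (G ⧸ H)) = (↑(l.map φ) : Multiset (G ⧸ H)).filter (· ≠ 1) := by
              rw [hmdef, Multiset.filter_coe]
          _ = (V.map φ).filter (· ≠ 1) := by rw [h1]
          _ ≤ (A.map φ + B.map φ).filter (· ≠ 1) := Multiset.filter_le_filter _ h2
          _ = (B.map φ).filter (· ≠ 1) := by rw [Multiset.filter_add, hAimg, zero_add]
          _ ≤ B.map φ := Multiset.filter_le _ _
          _ = T := hBimg
      exact hTfree m hmle (by simpa using hmne) ⟨m, rfl, hmprod⟩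
  -- conclude
  have hmem : smallDavenport ↥H + smallDavenport (G ⧸ H) ∈
      {k : ℕ | ∃ S' : Multiset G, Multiset.card S' = k ∧ ProductOneFree S'} := by
    refine ⟨A + B, ?_, hfree⟩
    rw [Multiset.card_add, hA, hB, Multiset.card_map, Multiset.card_map, hScard, hTcard]
  have hbdd : BddAbove {k : ℕ | ∃ S' : Multiset G, Multiset.card S' = k ∧ ProductOneFree S'} :=
    ⟨Nat.card G, fun k ⟨S', hc, hf⟩ => hc ▸ card_le_of_productOneFree hf⟩
  exact le_csSup hbdd hmem
end

section
/- Let G be a finite group and H a normal subgroup of G with exp(H) = exp(G). Then η(G) ≥ η(H) + d(G/H). -/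
/-- The `η`-constant of `G`. -/
noncomputable def etaConst (G : Type*) [Group G] : ℕ :=
  sInf {l : ℕ | ∀ S : Multiset G, l ≤ Multiset.card S →
    ∃ T, T ≤ S ∧ 1 ≤ Multiset.card T ∧ Multiset.card T ≤ Monoid.exponent G ∧ IsProductOne T}

/-- The defining set of `etaConst`. -/
def etaSet (G : Type*) [Group G] : Set ℕ :=
  {l : ℕ | ∀ S : Multiset G, l ≤ Multiset.card S →
    ∃ T, T ≤ S ∧ 1 ≤ Multiset.card T ∧ Multiset.card T ≤ Monoid.exponent G ∧ IsProductOne T}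

lemma etaConst_eq (G : Type*) [Group G] : etaConst G = sInf (etaSet G) := rfl

lemma etaSet_nonempty (G : Type*) [Group G] [Finite G] : (etaSet G).Nonempty := by
  classical
  refine ⟨Nat.card G * (Monoid.exponent G - 1) + 1, fun S hS => ?_⟩
  have hcard : ∃ g ∈ S.toFinset, Monoid.exponent G ≤ S.count g := by
    by_contra hcon
    push_neg at hcon
    have h1 : Multiset.card S = ∑ a ∈ S.toFinset, S.count a :=
      (Multiset.toFinset_sum_count_eq S).symm
    have h2 : ∑ a ∈ S.toFinset, S.count a ≤ S.toFinset.card * (Monoid.exponent G - 1) := by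
      refine Finset.sum_le_card_nsmul _ _ _ fun a ha => ?_
      have := hcon a ha
      omega
    have h3 : S.toFinset.card ≤ Nat.card G := by
      haveI := Fintype.ofFinite G
      rw [Nat.card_eq_fintype_card]
      exact Finset.card_le_univ _
    have h4 : S.toFinset.card * (Monoid.exponent G - 1) ≤
        Nat.card G * (Monoid.exponent G - 1) := Nat.mul_le_mul_right _ h3
    omega
  obtain ⟨g, hg, hcount⟩ := hcard
  refine ⟨Multiset.replicate (orderOf g) g, ?_, ?_, ?_, ?_⟩
  · rw [Multiset.le_iff_count]
    intro a
    rw [Multiset.count_replicate]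
    split
    · next h =>
        subst h
        exact le_trans (Nat.le_of_dvd
          (Nat.pos_of_ne_zero Monoid.exponent_ne_zero_of_finite)
          (Monoid.order_dvd_exponent g)) hcount
    · exact Nat.zero_le _
  · rw [Multiset.card_replicate]; exact orderOf_pos g
  · simpa using Nat.le_of_dvd
      (Nat.pos_of_ne_zero Monoid.exponent_ne_zero_of_finite)
      (Monoid.order_dvd_exponent g)
  · exact ⟨List.replicate (orderOf g) g, by simp [Multiset.coe_replicate],
      by simp [pow_orderOf_eq_one]⟩

lemma etaSet_upward {G : Type*} [Group G] {l l' : ℕ} (h : l ∈ etaSet G) (hl : l ≤ l') :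
    l' ∈ etaSet G := fun S hS => h S (le_trans hl hS)

lemma not_mem_etaSet_pred (G : Type*) [Group G] : etaConst G - 1 ∉ etaSet G := by
  rcases Nat.eq_zero_or_pos (etaConst G) with h | h
  · rw [h]
    intro hmem
    obtain ⟨T, hT, h1, -, -⟩ := hmem 0 (by simp)
    have : T = 0 := le_antisymm hT bot_le
    subst this
    simp at h1
  · exact Nat.notMem_of_lt_sInf (by rw [← etaConst_eq]; omega)

/-- product of the filtered list equals product of the image when
deleted elements map to `1`. -/
lemma filter_map_prod {G Q : Type*} [Group G] [Group Q] (φ : G →* Q)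
    (p : G → Prop) [DecidablePred p] :
    ∀ l : List G, (∀ x ∈ l, ¬ p x → φ x = 1) →
      ((l.filter p).map φ).prod = (l.map φ).prod := by
  intro l
  induction l with
  | nil => simp
  | cons a l ih =>
    intro h
    have ih' := ih fun x hx => h x (List.mem_cons_of_mem _ hx)
    by_cases hp : p a
    · simp [List.filter_cons, hp, ih']
    · simp [List.filter_cons, hp, ih', h a List.mem_cons_self hp]

lemma key_lemma {G : Type*} [Group G] [Finite G] (H : Subgroup G) [H.Normal]
    (hexp : Monoid.exponent H = Monoid.exponent G) (k : ℕ)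
    (hk : ∃ T : Multiset (G ⧸ H), Multiset.card T = k ∧ ProductOneFree T) :
    etaConst H + k ≤ etaConst G := by
  classical
  obtain ⟨T, hTcard, hTfree⟩ := hk
  -- a long sequence over H with no short product-one subsequence
  have hnotH := not_mem_etaSet_pred H
  simp only [etaSet, Set.mem_setOf_eq, not_forall] at hnotH
  push_neg at hnotH
  obtain ⟨S, hScard, hS⟩ := hnotH
  -- `1 ∉ T`
  have hone : (1 : G ⧸ H) ∉ T := by
    intro h1
    exact hTfree {1} (Multiset.singleton_le.2 h1) (by simp)
      ⟨[1], by simp, by simp⟩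
  -- lift T to G
  set T₀ : Multiset G := T.map Quotient.out with hT₀
  have hT₀mk : T₀.map (QuotientGroup.mk' H) = T := by
    rw [hT₀, Multiset.map_map]
    simp [Function.comp_def, QuotientGroup.out_eq']
  have hT₀notin : ∀ x ∈ T₀, x ∉ H := by
    intro x hx hxH
    obtain ⟨t, ht, rfl⟩ := Multiset.mem_map.1 hx
    have h2 : (QuotientGroup.mk t.out : G ⧸ H) = 1 := (QuotientGroup.eq_one_iff _).2 hxH
    rw [QuotientGroup.out_eq'] at h2
    exact hone (h2 ▸ ht)
  set S₀ : Multiset G := S.map (Subtype.val : H → G) with hS₀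
  have hS₀in : ∀ x ∈ S₀, x ∈ H := by
    intro x hx
    obtain ⟨s, hs, rfl⟩ := Multiset.mem_map.1 hx
    exact s.2
  set W : Multiset G := S₀ + T₀ with hW
  have hWcard : Multiset.card W = Multiset.card S + k := by
    rw [hW, Multiset.card_add, hS₀, hT₀, Multiset.card_map, Multiset.card_map]
    exact congrArg (Multiset.card S + ·) hTcard
  -- the main claim : etaConst H + k - 1 ∉ etaSet G
  have hnotG : etaConst H + k - 1 ∉ etaSet G := by
    intro hmem
    obtain ⟨U, hUle, hU1, hU2, l, hlU, hlprod⟩ := hmem W (by omega)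
    set φ := QuotientGroup.mk' H with hφ
    set p : G → Prop := fun x => x ∉ H with hp
    -- the part of U outside H
    have hfilt : U.filter p ≤ T₀ := by
      have h1 : U.filter p ≤ W.filter p := Multiset.filter_le_filter p hUle
      rw [hW, Multiset.filter_add] at h1
      have h2 : S₀.filter p = 0 := by
        rw [Multiset.filter_eq_nil]
        intro a ha
        simp [hp, hS₀in a ha]
      have h3 : T₀.filter p = T₀ := Multiset.filter_eq_self.2 (fun a ha => hT₀notin a ha)
      rwa [h2, h3, zero_add] at h1
    have hfiltT : (U.filter p).map φ ≤ T := hT₀mk ▸ Multiset.map_le_map hfilt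
    have hmapone : IsProductOne ((U.filter p).map φ) := by
      refine ⟨(l.filter p).map φ, ?_, ?_⟩
      · rw [← Multiset.map_coe, ← Multiset.filter_coe, hlU]
      · rw [filter_map_prod φ p l ?_, List.prod_hom l φ, hlprod, map_one]
        intro x _ hx
        exact (QuotientGroup.eq_one_iff x).2 (not_not.mp hx)
    have hUT0 : U.filter p = 0 := by
      by_contra hne
      exact hTfree _ hfiltT (by simpa using hne) hmapone
    -- hence all elements of U are in H
    have hUinH : ∀ x ∈ U, x ∈ H := by
      intro x hx
      by_contra hxH
      have : x ∈ U.filter p := Multiset.mem_filter.2 ⟨hx, hxH⟩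
      rw [hUT0] at this
      simp at this
    -- U ≤ S₀
    have hUS₀ : U ≤ S₀ := by
      have h1 : U.filter (fun x => ¬ p x) = U := by
        have := Multiset.filter_add_not p U
        rw [hUT0, zero_add] at this
        exact this
      have h2 : U.filter (fun x => ¬ p x) ≤ W.filter (fun x => ¬ p x) :=
        Multiset.filter_le_filter _ hUle
      rw [h1, hW, Multiset.filter_add] at h2
      have h3 : T₀.filter (fun x => ¬ p x) = 0 := by
        rw [Multiset.filter_eq_nil]
        intro a ha
        simp [hp, hT₀notin a ha]
      have h4 : S₀.filter (fun x => ¬ p x) = S₀ := by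
        refine Multiset.filter_eq_self.2 fun a ha => ?_
        simp [hp, hS₀in a ha]
      rwa [h3, h4, add_zero] at h2
    -- lift U to H
    have hlinH : ∀ x ∈ l, x ∈ H := by
      intro x hx
      exact hUinH x (by rw [← hlU]; exact hx)
    set lH : List H := l.attach.map (fun x => (⟨x.1, hlinH x.1 x.2⟩ : H)) with hlH
    have hlHmap : lH.map (Subtype.val : H → G) = l := by
      rw [hlH, List.map_map]
      simp [Function.comp_def]
    set V : Multiset H := (lH : Multiset H) with hV
    have hVmap : V.map (Subtype.val : H → G) = U := by
      rw [hV, Multiset.map_coe, hlHmap, hlU]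
    have hVle : V ≤ S := by
      rw [← Multiset.map_le_map_iff (f := (Subtype.val : H → G)) Subtype.val_injective,
        hVmap, ← hS₀]
      exact hUS₀
    have hVcard : Multiset.card V = Multiset.card U := by
      rw [← hVmap, Multiset.card_map]
    have hVone : IsProductOne V := by
      refine ⟨lH, rfl, ?_⟩
      have h2 : ((lH.prod : H) : G) = 1 := by
        rw [SubmonoidClass.coe_list_prod, hlHmap, hlprod]
      exact_mod_cast h2
    exact hS V hVle (by omega) (by rw [hVcard, hexp]; exact hU2) hVone
  -- conclude
  rw [etaConst_eq G]
  refine le_csInf (etaSet_nonempty G) fun b hb => ?_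
  by_contra hcon
  push_neg at hcon
  exact hnotG (etaSet_upward hb (by omega))

theorem stmt_1 (G : Type*) [Group G] [Finite G] (H : Subgroup G) [H.Normal]
    (hexp : Monoid.exponent H = Monoid.exponent G) :
    etaConst H + smallDavenport (G ⧸ H) ≤ etaConst G := by
  have hbase : etaConst H ≤ etaConst G :=
    by simpa using key_lemma H hexp 0 ⟨0, by simp, fun T hT hT0 => absurd (le_antisymm hT bot_le) hT0⟩
  have hsup : smallDavenport (G ⧸ H) ≤ etaConst G - etaConst H := by
    refine csSup_le ⟨0, 0, by simp, fun T hT hT0 => absurd (le_antisymm hT bot_le) hT0⟩ ?_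
    rintro k ⟨T, hTc, hTf⟩
    have := key_lemma H hexp k ⟨T, hTc, hTf⟩
    omega
  omega
end

section
/- Let m ≥ 2 and n ≥ 3 be integers with m dividing n. Then d(D_{2n} × C_m) ≥ m + n − 1, where D_{2n} is the dihedral group of order 2n and C_m is the cyclic group of order m. -/
/-- Product-one free sequences over a finite group have length < |G|. -/
lemma pof_card_lt {G : Type*} [Group G] [Fintype G] {S : Multiset G}
    (h : ProductOneFree S) : Multiset.card S < Fintype.card G := by
  set l : List G := S.toList with hldef
  have hl : (l : Multiset G) = S := Multiset.coe_toList S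
  have key : ∀ i j : ℕ, i < j → j ≤ l.length →
      (l.take i).prod ≠ (l.take j).prod := by
    intro i j hij hjl heq
    set seg := (l.drop i).take (j - i) with hseg
    have htj : l.take j = l.take i ++ seg := by
      have : j = i + (j - i) := by omega
      rw [this, List.take_add]
    have hprodseg : seg.prod = 1 := by
      have := heq
      rw [htj, List.prod_append] at this
      exact (mul_left_cancel (a := (l.take i).prod) (by rw [mul_one]; exact this)).symm
    have hlen : seg.length = j - i := by
      simp [hseg, List.length_take, List.length_drop]; omega
    have hne : seg ≠ [] := by
      intro hnil
      rw [hnil] at hlen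
      simp at hlen; omega
    have hsub : seg.Sublist l :=
      ((List.take_prefix _ _).sublist).trans ((List.drop_suffix i l).sublist)
    have hle : (seg : Multiset G) ≤ S := by
      rw [← hl]
      exact Multiset.coe_le.2 hsub.subperm
    exact h seg hle (by simpa using hne) ⟨seg, rfl, hprodseg⟩
  have hinj : Function.Injective (fun i : Fin (l.length + 1) => (l.take i).prod) := by
    intro i j hf
    by_contra hne
    rcases lt_or_gt_of_ne (fun h => hne (Fin.ext h) : (i : ℕ) ≠ j) with h' | h'
    · exact key i j h' (by omega) hf
    · exact key j i h' (by omega) hf.symm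
  have := Fintype.card_le_of_injective _ hinj
  rw [Fintype.card_fin] at this
  have hcard : Multiset.card S = l.length := by
    rw [← hl]; simp
  omega

/-- Sum of a list-map under an "additive character". -/
lemma map_sum_hom {G A : Type*} [Monoid G] [AddCommMonoid A] (f : G → A)
    (h1 : f 1 = 0) (hmul : ∀ x y, f (x * y) = f x + f y) :
    ∀ l : List G, (l.map f).sum = f l.prod := by
  intro l
  induction l with
  | nil => simp [h1]
  | cons a t ih => simp [ih, hmul]

lemma sum_indicator {α : Type*} [DecidableEq α] {A : Type*} [AddCommMonoidWithOne A]
    (l : List α) (y : α) :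
    (l.map fun x => if x = y then (1 : A) else 0).sum
      = (Multiset.count y (l : Multiset α) : A) := by
  induction l with
  | nil => simp
  | cons a t ih =>
      have : ((a :: t : List α) : Multiset α) = a ::ₘ (t : Multiset α) := rfl
      rw [List.map_cons, List.sum_cons, ih, this, Multiset.count_cons]
      by_cases h : a = y
      · simp [h, add_comm]
      · simp [h, Ne.symm h]

lemma sum_map_add' {α A : Type*} [AddCommMonoid A] (l : List α) (f g : α → A) :
    (l.map fun x => f x + g x).sum = (l.map f).sum + (l.map g).sum := by
  induction l with
  | nil => simp
  | cons a t ih => simp [ih]; abel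

/-- Sign of a dihedral group element (0 for rotations, 1 for reflections) in `ZMod 2`. -/
def dsgn {n : ℕ} : DihedralGroup n → ZMod 2
  | DihedralGroup.r _ => 0
  | DihedralGroup.sr _ => 1

lemma dsgn_one {n : ℕ} : dsgn (1 : DihedralGroup n) = 0 := by
  rw [DihedralGroup.one_def]; rfl

lemma dsgn_mul {n : ℕ} (x y : DihedralGroup n) : dsgn (x * y) = dsgn x + dsgn y := by
  cases x <;> cases y <;>
    simp only [dsgn, DihedralGroup.r_mul_r, DihedralGroup.r_mul_sr,
      DihedralGroup.sr_mul_r, DihedralGroup.sr_mul_sr] <;> decide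

theorem stmt_4 (m n : ℕ) (hm : 2 ≤ m) (hn : 3 ≤ n) (hdvd : m ∣ n) :
    m + n - 1 ≤ smallDavenport (DihedralGroup n × Multiplicative (ZMod m)) := by
  haveI : NeZero n := ⟨by omega⟩
  haveI : NeZero m := ⟨by omega⟩
  haveI : Fact (1 < m) := ⟨by omega⟩
  haveI : Fact (1 < n) := ⟨by omega⟩
  set G := DihedralGroup n × Multiplicative (ZMod m)
  set x : G := (DihedralGroup.r 1, 1) with hxdef
  set y : G := (DihedralGroup.sr 0, Multiplicative.ofAdd (1 : ZMod m)) with hydef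
  set z : G := ((1 : DihedralGroup n), Multiplicative.ofAdd (1 : ZMod m)) with hzdef
  have hxy : x ≠ y := by
    intro h
    exact absurd (congrArg Prod.fst h) (by simp [hxdef, hydef])
  have hxz : x ≠ z := by
    intro h
    have := congrArg (fun w : G => Multiplicative.toAdd w.2) h
    simp only [hxdef, hzdef, toAdd_one, toAdd_ofAdd] at this
    exact one_ne_zero this.symm
  have hyz : y ≠ z := by
    intro h
    have := congrArg Prod.fst h
    simp only [hydef, hzdef] at this
    rw [DihedralGroup.one_def] at this
    exact absurd this (by intro h; cases h)
  set S : Multiset G := Multiset.replicate (n - 1) x + Multiset.replicate 1 y +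
    Multiset.replicate (m - 1) z with hS
  have hScard : Multiset.card S = m + n - 1 := by
    simp [hS]; omega
  have hPF : ProductOneFree S := by
    intro T hTS hT0 ⟨l, hlT, hlprod⟩
    have hlS : (l : Multiset G) ≤ S := hlT ▸ hTS
    have hlne : l ≠ [] := by
      intro h; rw [h] at hlT; exact hT0 hlT.symm
    -- membership
    have hmem : ∀ w ∈ l, w = x ∨ w = y ∨ w = z := by
      intro w hw
      have : w ∈ S := Multiset.mem_of_le hlS (by simpa using hw)
      simp only [hS, Multiset.mem_add, Multiset.mem_replicate] at this
      tauto
    -- counts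
    have hScount : ∀ w : G, Multiset.count w S =
        (if x = w then n - 1 else 0) + (if y = w then 1 else 0) +
          (if z = w then m - 1 else 0) := by
      intro w
      rw [hS, Multiset.count_add, Multiset.count_add, Multiset.count_replicate,
        Multiset.count_replicate, Multiset.count_replicate]
    have hcount : ∀ w : G, Multiset.count w (l : Multiset G) ≤ Multiset.count w S :=
      fun w => Multiset.count_le_of_le w hlS
    have hcx : Multiset.count x (l : Multiset G) ≤ n - 1 := by
      have := hcount x
      rw [hScount x, if_pos rfl, if_neg (Ne.symm hxy), if_neg (Ne.symm hxz)] at this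
      omega
    have hcy : Multiset.count y (l : Multiset G) ≤ 1 := by
      have := hcount y
      rw [hScount y, if_pos rfl, if_neg hxy, if_neg (Ne.symm hyz)] at this
      omega
    have hcz : Multiset.count z (l : Multiset G) ≤ m - 1 := by
      have := hcount z
      rw [hScount z, if_pos rfl, if_neg hxz, if_neg hyz] at this
      omega
    -- second coordinate: sum of toAdd of snd is 0
    have hsnd : (l.map fun w : G => Multiplicative.toAdd w.2).sum = 0 := by
      rw [map_sum_hom (fun w : G => Multiplicative.toAdd w.2) (by simp)
        (by intro a b; rfl), hlprod]
      simp
    have hsnd' : ((Multiset.count y (l : Multiset G)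
        + Multiset.count z (l : Multiset G) : ℕ) : ZMod m) = 0 := by
      have hcongr : (l.map fun w : G => Multiplicative.toAdd w.2) =
          l.map fun w : G => (if w = y then (1 : ZMod m) else 0) +
            (if w = z then (1 : ZMod m) else 0) := by
        apply List.map_congr_left
        intro w hw
        rcases hmem w hw with h | h | h <;> subst h
        · have h1 := hxy; have h2 := hxz
          simp only [hxdef] at h1 h2 ⊢; simp [h1, h2]
        · have h1 := hyz
          simp only [hydef] at h1 ⊢; simp [h1]
        · have h1 := Ne.symm hyz
          simp only [hzdef] at h1 ⊢; simp [h1]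
      rw [hcongr, sum_map_add', sum_indicator, sum_indicator] at hsnd
      push_cast
      exact hsnd
    have hdvdBC : m ∣ Multiset.count y (l : Multiset G) + Multiset.count z (l : Multiset G) :=
      (ZMod.natCast_eq_zero_iff _ _).1 hsnd'
    have hBC : Multiset.count y (l : Multiset G) + Multiset.count z (l : Multiset G) = 0 ∨
        Multiset.count y (l : Multiset G) + Multiset.count z (l : Multiset G) = m := by
      rcases Nat.eq_zero_or_pos
        (Multiset.count y (l : Multiset G) + Multiset.count z (l : Multiset G)) with h | h
      · exact Or.inl h
      · have := Nat.le_of_dvd h hdvdBC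
        omega
    rcases hBC with hBC | hBC
    · -- all elements are x
      have hally : ∀ w ∈ l, w = x := by
        intro w hw
        rcases hmem w hw with h | h | h
        · exact h
        · exact absurd (Multiset.mem_coe.2 (h ▸ hw))
            (Multiset.count_eq_zero.1 (by omega : Multiset.count y (l : Multiset G) = 0))
        · exact absurd (Multiset.mem_coe.2 (h ▸ hw))
            (Multiset.count_eq_zero.1 (by omega : Multiset.count z (l : Multiset G) = 0))
      have hrep : l = List.replicate l.length x :=
        List.eq_replicate_iff.2 ⟨rfl, hally⟩
      have hcnt : Multiset.count x (l : Multiset G) = l.length := by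
        conv_lhs => rw [hrep]
        rw [Multiset.coe_replicate, Multiset.count_replicate, if_pos rfl]
      have hlenle : l.length ≤ n - 1 := by rw [← hcnt]; exact hcx
      have hlenpos : 0 < l.length := List.length_pos_iff.2 hlne
      have hpr : l.prod = (DihedralGroup.r (l.length : ZMod n), (1 : Multiplicative (ZMod m))) := by
        conv_lhs => rw [hrep]
        rw [List.prod_replicate, hxdef, Prod.pow_mk, one_pow, DihedralGroup.r_one_pow]
      rw [hlprod] at hpr
      have h1 : (1 : DihedralGroup n) = DihedralGroup.r (l.length : ZMod n) :=
        congrArg Prod.fst hpr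
      rw [DihedralGroup.one_def] at h1
      have hcast : ((l.length : ℕ) : ZMod n) = 0 := (DihedralGroup.r.injEq _ _ ▸ h1).symm
      have := (ZMod.natCast_eq_zero_iff _ _).1 hcast
      have := Nat.le_of_dvd hlenpos this
      omega
    · -- count y = 1; use the sign in ZMod 2
      have hB1 : Multiset.count y (l : Multiset G) = 1 := by omega
      have hsgn : (l.map fun w : G => dsgn w.1).sum = 0 := by
        rw [map_sum_hom (fun w : G => dsgn w.1)
          (by simpa using dsgn_one)
          (by intro a b
              show dsgn (a * b).1 = dsgn a.1 + dsgn b.1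
              rw [Prod.fst_mul]; exact dsgn_mul a.1 b.1), hlprod]
        simpa using dsgn_one
      have hcongr : (l.map fun w : G => dsgn w.1) =
          l.map fun w : G => if w = y then (1 : ZMod 2) else 0 := by
        apply List.map_congr_left
        intro w hw
        rcases hmem w hw with h | h | h <;> subst h
        · have h1 := hxy
          simp only [hxdef] at h1 ⊢; simp [h1, dsgn]
        · simp [hydef, dsgn]
        · simp only [if_neg (Ne.symm hyz), hzdef]
          exact dsgn_one
      rw [hcongr, sum_indicator, hB1] at hsgn
      exact absurd hsgn (by decide)
  -- conclude
  have hmemS : m + n - 1 ∈ {k : ℕ | ∃ S : Multiset G, Multiset.card S = k ∧ ProductOneFree S} :=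
    ⟨S, hScard, hPF⟩
  have hbdd : BddAbove {k : ℕ | ∃ S : Multiset G, Multiset.card S = k ∧ ProductOneFree S} := by
    refine ⟨Fintype.card G, ?_⟩
    rintro k ⟨S', hc, hpf⟩
    exact le_of_lt (hc ▸ pof_card_lt hpf)
  exact le_csSup hbdd hmemS
end

section
/- Let n ≥ 4 be an even integer. Then d(D_{2n} × C_2) = n + 1, i.e., the maximal length of a sequence over D_{2n} × C_2 with no nonempty product-one subsequence is n + 1. -/
set_option linter.unusedSectionVars false
set_option linter.unusedVariables false

open Multiset


section Subsums
variable {A : Type*} [CommGroup A] [DecidableEq A]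

/-- set of products of nonempty sub-multisets -/
def subsums (S : Multiset A) : Finset A :=
  ((S.powerset.filter (· ≠ 0)).map Multiset.prod).toFinset

lemma mem_subsums {S : Multiset A} {a : A} :
    a ∈ subsums S ↔ ∃ T : Multiset A, T ≤ S ∧ T ≠ 0 ∧ T.prod = a := by
  simp [subsums, Multiset.mem_filter, Multiset.mem_powerset, and_assoc, eq_comm]

lemma subsums_mono {S S' : Multiset A} (h : S ≤ S') : subsums S ⊆ subsums S' := by
  intro a ha
  rw [mem_subsums] at ha ⊢
  obtain ⟨T, hT, hT0, hTp⟩ := ha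
  exact ⟨T, hT.trans h, hT0, hTp⟩

/-- zero-sum free (multiplicative): no nonempty submultiset has product 1 -/
def ZSF (S : Multiset A) : Prop := ∀ T : Multiset A, T ≤ S → T ≠ 0 → T.prod ≠ 1

lemma ZSF.mono {S S' : Multiset A} (h : S ≤ S') (hz : ZSF S') : ZSF S :=
  fun T hT => hz T (hT.trans h)

lemma one_not_mem_subsums {S : Multiset A} (hz : ZSF S) : (1:A) ∉ subsums S := by
  rw [mem_subsums]
  rintro ⟨T, hT, hT0, hTp⟩
  exact hz T hT hT0 hTp

lemma prod_mem_subsums {S : Multiset A} (hS : S ≠ 0) : S.prod ∈ subsums S :=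
  mem_subsums.2 ⟨S, le_refl _, hS, rfl⟩

lemma mem_subsums_of_mem {S : Multiset A} {a : A} (h : a ∈ S) : a ∈ subsums S :=
  mem_subsums.2 ⟨{a}, singleton_le.2 h, by simp, by simp⟩

lemma prod_sub_eq {S T : Multiset A} (h : T ≤ S) : (S - T).prod = S.prod * T.prod⁻¹ := by
  have h1 : T + (S - T) = S := by
    rw [add_comm]; exact tsub_add_cancel_of_le h
  have h2 := congrArg Multiset.prod h1
  rw [Multiset.prod_add] at h2
  rw [← h2, mul_comm T.prod, mul_inv_cancel_right]

/-- complement trick -/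
lemma compl_mem_subsums {S : Multiset A} {a : A} (ha : a ∈ subsums S) :
    a = S.prod ∨ S.prod * a⁻¹ ∈ subsums S := by
  rw [mem_subsums] at ha
  obtain ⟨T, hT, hT0, rfl⟩ := ha
  by_cases hST : S - T = 0
  · left
    have : T + (S - T) = S := by rw [add_comm]; exact tsub_add_cancel_of_le hT
    rw [hST, add_zero] at this
    rw [this]
  · right
    refine mem_subsums.2 ⟨S - T, tsub_le_self, hST, prod_sub_eq hT⟩

/-- prod of whole is not a subsum of a proper part, under ZSF -/
lemma prod_not_mem_subsums_erase {S : Multiset A} (hz : ZSF S) {x : A} (hx : x ∈ S) :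
    S.prod ∉ subsums (S.erase x) := by
  rw [mem_subsums]
  rintro ⟨T, hT, hT0, hTp⟩
  have hTS : T ≤ S := hT.trans (erase_le _ _)
  have hne : S - T ≠ 0 := by
    intro h0
    have hc : Multiset.card S ≤ Multiset.card T := by
      have h3 := congrArg Multiset.card h0
      simp only [Multiset.card_sub hTS, Multiset.card_zero] at h3
      omega
    have h1 : Multiset.card T ≤ Multiset.card (S.erase x) := card_le_card hT
    rw [card_erase_of_mem hx] at h1
    have h2 : 0 < Multiset.card S := card_pos.2 (by rintro rfl; simp at hx)
    have h5 := Nat.succ_pred_eq_of_pos h2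
    omega
  refine hz (S - T) tsub_le_self hne ?_
  rw [prod_sub_eq hTS, hTp, mul_inv_cancel]

lemma subsums_cons (x : A) (S : Multiset A) :
    subsums (x ::ₘ S) = (subsums S ∪ (subsums S).image (x * ·)) ∪ {x} := by
  ext a
  simp only [Finset.mem_union, Finset.mem_image, Finset.mem_singleton, mem_subsums]
  constructor
  · rintro ⟨T, hT, hT0, rfl⟩
    by_cases hx : x ∈ T
    · have hT' : T.erase x ≤ S := by
        have := Multiset.erase_le_erase x hT
        rwa [Multiset.erase_cons_head] at this
      by_cases h0 : T.erase x = 0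
      · right
        have : T = {x} := by
          have := Multiset.cons_erase hx
          rw [h0] at this
          exact this.symm
        rw [this]; simp
      · left; right
        refine ⟨(T.erase x).prod, ⟨T.erase x, hT', h0, rfl⟩, ?_⟩
        rw [← Multiset.prod_cons, Multiset.cons_erase hx]
    · left; left
      have hT' : T ≤ S := by
        rw [Multiset.le_iff_count] at hT ⊢
        intro b
        have := hT b
        rcases eq_or_ne b x with rfl | hbx
        · simp [Multiset.count_eq_zero_of_notMem hx]
        · simpa [Multiset.count_cons, hbx] using this
      exact ⟨T, hT', hT0, rfl⟩
  · rintro ((⟨T, hT, hT0, rfl⟩ | ⟨b, ⟨T, hT, hT0, rfl⟩, rfl⟩) | h)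
    · exact ⟨T, hT.trans (le_cons_self _ _), hT0, rfl⟩
    · refine ⟨x ::ₘ T, cons_le_cons _ hT, by simp, by rw [Multiset.prod_cons]⟩
    · exact ⟨x ::ₘ 0, cons_le_cons _ (Multiset.zero_le S), by simp, by simp [h]⟩

lemma card_subsums_cons_ge (x : A) (S : Multiset A) (hz : ZSF (x ::ₘ S)) :
    (subsums S).card + 1 ≤ (subsums (x ::ₘ S)).card := by
  have hsub : insert (x ::ₘ S).prod (subsums S) ⊆ subsums (x ::ₘ S) := by
    intro a ha
    rcases Finset.mem_insert.1 ha with rfl | ha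
    · exact prod_mem_subsums (by simp)
    · exact subsums_mono (le_cons_self _ _) ha
  have hnot : (x ::ₘ S).prod ∉ subsums S := by
    have h1 : ((x ::ₘ S).erase x) = S := Multiset.erase_cons_head x S
    have := prod_not_mem_subsums_erase hz (x := x) (by simp)
    rwa [h1] at this
  calc (subsums S).card + 1 = (insert (x ::ₘ S).prod (subsums S)).card := by
        rw [Finset.card_insert_of_notMem hnot]
      _ ≤ _ := Finset.card_le_card hsub

/-- prefix-sum lemma -/
lemma card_le_card_subsums (S : Multiset A) (hz : ZSF S) :
    Multiset.card S ≤ (subsums S).card := by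
  induction S using Multiset.induction with
  | empty => simp
  | cons x S ih =>
    have h1 := card_subsums_cons_ge x S hz
    have h2 := ih (hz.mono (le_cons_self _ _))
    simp only [Multiset.card_cons]
    omega



lemma cons_le_of_le_erase {S T : Multiset A} {g : A} (hg : g ∈ S) (hT : T ≤ S.erase g) :
    g ::ₘ T ≤ S := by
  rw [← Multiset.cons_erase hg]
  exact cons_le_cons _ hT

lemma one_not_mem_of_zsf {S : Multiset A} (hz : ZSF S) : (1:A) ∉ S := by
  intro h
  exact hz (1 ::ₘ 0) (by simpa using (singleton_le.2 h)) (by simp) (by simp)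

lemma subsums_cons' (x : A) (S : Multiset A) (hz : ZSF S) :
    subsums (x ::ₘ S) = subsums S ∪ (insert 1 (subsums S)).image (x * ·) := by
  rw [subsums_cons]
  ext a
  simp only [Finset.mem_union, Finset.mem_image, Finset.mem_singleton, Finset.mem_insert]
  constructor
  · rintro ((h | ⟨b, hb, rfl⟩) | h)
    · exact Or.inl h
    · exact Or.inr ⟨b, Or.inr hb, rfl⟩
    · exact Or.inr ⟨1, Or.inl rfl, by simp [h]⟩
  · rintro (h | ⟨b, (rfl | hb), rfl⟩)
    · exact Or.inl (Or.inl h)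
    · exact Or.inr (mul_one x)
    · exact Or.inl (Or.inr ⟨b, hb, rfl⟩)

/-- Case (i) of Olson-White: removing some element leaves a cyclic span. -/
lemma OW_case1 {S : Multiset A} (hz : ZSF S) {x : A} (hx : x ∈ S) {c : A}
    (hc : ∀ y ∈ S.erase x, y ∈ Subgroup.zpowers c) (hxc : x ∉ Subgroup.zpowers c) :
    2 * Multiset.card S ≤ (subsums S).card + 1 := by
  set S' := S.erase x with hS'
  have hzS' : ZSF S' := hz.mono (erase_le _ _)
  have hcons : x ::ₘ S' = S := Multiset.cons_erase hx
  have hsub : ∀ a ∈ subsums S', a ∈ Subgroup.zpowers c := by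
    intro a ha
    rw [mem_subsums] at ha
    obtain ⟨T, hT, -, rfl⟩ := ha
    exact Subgroup.multiset_prod_mem _ T (fun y hy => hc y ((Multiset.subset_of_le hT) hy))
  have hrw : subsums S = subsums S' ∪ (insert 1 (subsums S')).image (x * ·) := by
    rw [← hcons]; exact subsums_cons' x S' hzS'
  have hdisj : Disjoint (subsums S') ((insert 1 (subsums S')).image (x * ·)) := by
    rw [Finset.disjoint_right]
    rintro a ha hmem
    obtain ⟨b, hb, rfl⟩ := Finset.mem_image.1 ha
    have hbz : b ∈ Subgroup.zpowers c := by
      rcases Finset.mem_insert.1 hb with rfl | hb'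
      · exact Subgroup.one_mem _
      · exact hsub b hb'
    have : x ∈ Subgroup.zpowers c := by
      have hxb := hsub _ hmem
      have := mul_mem hxb (inv_mem hbz)
      simpa [mul_assoc] using this
    exact hxc this
  have hinj : Function.Injective (x * ·) := fun a b h => by simpa using h
  have hcard : (subsums S).card = (subsums S').card + ((subsums S').card + 1) := by
    rw [hrw, Finset.card_union_of_disjoint hdisj, Finset.card_image_of_injective _ hinj,
      Finset.card_insert_of_notMem (one_not_mem_subsums hzS')]
  have hpre : Multiset.card S' ≤ (subsums S').card := card_le_card_subsums S' hzS'
  have hcS : Multiset.card S = Multiset.card S' + 1 := by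
    rw [← hcons]; simp
  omega

/-- Olson–White: zero-sum free with non-cyclic span has many subsums. -/
theorem OW : ∀ (N : ℕ) (S : Multiset A), Multiset.card S ≤ N → ZSF S →
    (¬ ∃ c : A, ∀ y ∈ S, y ∈ Subgroup.zpowers c) →
    2 * Multiset.card S ≤ (subsums S).card + 1 := by
  intro N
  induction N with
  | zero =>
    intro S hcard _ hnc
    have h0 : S = 0 := by
      have := le_antisymm hcard (Nat.zero_le _)
      rwa [Multiset.card_eq_zero] at this
    subst h0
    exact absurd ⟨1, fun y hy => by simp at hy⟩ hnc
  | succ N IH =>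
    intro S hcard hz hnc
    classical
    have hS0 : S ≠ 0 := by rintro rfl; exact hnc ⟨1, by simp⟩
    by_cases hcase : ∃ x ∈ S, ∃ c : A, ∀ y ∈ S.erase x, y ∈ Subgroup.zpowers c
    · obtain ⟨x, hx, c, hc⟩ := hcase
      have hxc : x ∉ Subgroup.zpowers c := by
        intro hxc
        refine hnc ⟨c, fun y hy => ?_⟩
        rcases eq_or_ne y x with rfl | hyx
        · exact hxc
        · exact hc y ((Multiset.mem_erase_of_ne hyx).2 hy)
      exact OW_case1 hz hx hc hxc
    · push_neg at hcase
      by_contra hK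
      push_neg at hK
      set l := Multiset.card S with hl
      have hl1 : 1 ≤ l := by
        rw [hl]; exact card_pos.2 hS0
      -- key equalities for every x ∈ S
      have key : ∀ x ∈ S, subsums S = insert S.prod (subsums (S.erase x)) := by
        intro x hx
        have hzx : ZSF (S.erase x) := hz.mono (erase_le _ _)
        have hcx : Multiset.card (S.erase x) = l - 1 := by
          rw [card_erase_of_mem hx, Nat.pred_eq_sub_one, ← hl]
        have hIH : 2 * (l - 1) ≤ (subsums (S.erase x)).card + 1 := by
          have := IH (S.erase x) (by omega) hzx (by
            intro ⟨c, hc⟩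
            obtain ⟨y, hy, hyc⟩ := hcase x hx c
            exact hyc (hc y hy))
          rwa [hcx] at this
        have hsubset : insert S.prod (subsums (S.erase x)) ⊆ subsums S := by
          intro a ha
          rcases Finset.mem_insert.1 ha with rfl | ha
          · exact prod_mem_subsums hS0
          · exact subsums_mono (erase_le _ _) ha
        have hnotmem : S.prod ∉ subsums (S.erase x) := prod_not_mem_subsums_erase hz hx
        have hcard2 : (subsums S).card ≤ (insert S.prod (subsums (S.erase x))).card := by
          rw [Finset.card_insert_of_notMem hnotmem]
          omega
        exact (Finset.eq_of_subset_of_card_le hsubset hcard2).symm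
      obtain ⟨g, hg⟩ := Multiset.exists_mem_of_ne_zero hS0
      have hnc' : ∀ c : A, ∃ y ∈ S, y ∉ Subgroup.zpowers c := by
        intro c
        by_contra hcon
        push_neg at hcon
        exact hnc ⟨c, hcon⟩
      obtain ⟨h', hh'S, hh'⟩ := hnc' g
      -- set-up
      set s := S.prod with hs
      set B : Finset A := insert 1 (subsums (S.erase g)) with hB
      have hone : (1:A) ∉ S := one_not_mem_of_zsf hz
      have hBmem : ∀ b ∈ B, g * b ∈ subsums S ∧ g * b ≠ 1 := by
        intro b hb
        rcases Finset.mem_insert.1 hb with rfl | hb'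
        · constructor
          · simpa using mem_subsums_of_mem hg
          · intro h
            rw [mul_one] at h
            exact hone (h ▸ hg)
        · rw [mem_subsums] at hb'
          obtain ⟨T, hT, hT0, rfl⟩ := hb'
          have hgT : g ::ₘ T ≤ S := cons_le_of_le_erase hg hT
          constructor
          · exact mem_subsums.2 ⟨g ::ₘ T, hgT, by simp, by simp⟩
          · intro h1
            exact hz (g ::ₘ T) hgT (by simp) (by simpa using h1)
      -- Part 1 : s ∈ zpowers g
      have part1 : s ∈ Subgroup.zpowers g := by
        by_contra hsz
        set F := B.filter (· ∈ Subgroup.zpowers g) with hF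
        have h1F : (1:A) ∈ F := by
          simp [hF, hB, Subgroup.one_mem]
        have hmap : ∀ b ∈ F, g * b ∈ F.erase 1 := by
          intro b hb
          obtain ⟨hbB, hbz⟩ := Finset.mem_filter.1 hb
          obtain ⟨hgb, hgb1⟩ := hBmem b hbB
          rw [key g hg] at hgb
          rcases Finset.mem_insert.1 hgb with heq | hgb'
          · exact absurd (heq ▸ mul_mem (Subgroup.mem_zpowers g) hbz) hsz
          · refine Finset.mem_erase.2 ⟨hgb1, Finset.mem_filter.2 ⟨Finset.mem_insert.2 (Or.inr hgb'), mul_mem (Subgroup.mem_zpowers g) hbz⟩⟩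
        have hinj : Set.InjOn (g * ·) F := fun a _ b _ h => by simpa using h
        have hle : F.card ≤ (F.erase 1).card :=
          Finset.card_le_card_of_injOn _ hmap hinj
        rw [Finset.card_erase_of_mem h1F] at hle
        have : 0 < F.card := Finset.card_pos.2 ⟨1, h1F⟩
        omega
      -- Part 2 : cosets meeting B off ⟨g⟩ are full
      have part2 : ∀ y ∈ B, y ∉ Subgroup.zpowers g → ∀ j : ℤ, y * g ^ j ∈ B := by
        intro y hy hyz
        set C := B.filter (fun b => y⁻¹ * b ∈ Subgroup.zpowers g) with hC
        have hyC : y ∈ C := Finset.mem_filter.2 ⟨hy, by simpa using Subgroup.one_mem _⟩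
        have hup : ∀ b ∈ C, g * b ∈ C := by
          intro b hb
          obtain ⟨hbB, hbz⟩ := Finset.mem_filter.1 hb
          obtain ⟨hgb, hgb1⟩ := hBmem b hbB
          rw [key g hg] at hgb
          rcases Finset.mem_insert.1 hgb with heq | hgb'
          · exfalso
            have hbzg : b ∈ Subgroup.zpowers g := by
              have : b = g⁻¹ * s := by rw [← heq]; group
              rw [this]
              exact mul_mem (inv_mem (Subgroup.mem_zpowers g)) part1
            have : y⁻¹ ∈ Subgroup.zpowers g := by
              have := mul_mem hbz (inv_mem hbzg)
              simpa [mul_assoc] using this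
            exact hyz (by simpa using inv_mem this)
          · refine Finset.mem_filter.2 ⟨Finset.mem_insert.2 (Or.inr hgb'), ?_⟩
            have : y⁻¹ * (g * b) = g * (y⁻¹ * b) := by rw [mul_left_comm]
            rw [this]
            exact mul_mem (Subgroup.mem_zpowers g) hbz
        have himg : C.image (g * ·) = C := by
          apply Finset.eq_of_subset_of_card_le
          · intro a ha
            obtain ⟨b, hb, rfl⟩ := Finset.mem_image.1 ha
            exact hup b hb
          · rw [Finset.card_image_of_injective _ (fun a b h => by simpa using h : Function.Injective (g * ·))]
        have hdown : ∀ b ∈ C, g⁻¹ * b ∈ C := by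
          intro b hb
          rw [← himg] at hb
          obtain ⟨b', hb', rfl⟩ := Finset.mem_image.1 hb
          simpa using hb'
        intro j
        have : y * g ^ j ∈ C := by
          induction j using Int.induction_on with
          | zero => simpa using hyC
          | succ k ih =>
            have : y * g ^ ((k : ℤ) + 1) = g * (y * g ^ (k:ℤ)) := by
              rw [zpow_add, zpow_one, ← mul_assoc, mul_comm (y * g ^ (k:ℤ)) g]
            rw [this]
            exact hup _ ih
          | pred k ih =>
            have : y * g ^ (-(k : ℤ) - 1) = g⁻¹ * (y * g ^ (-(k:ℤ))) := by
              rw [zpow_sub, zpow_one, ← mul_assoc, mul_comm (y * g ^ (-(k:ℤ))) g⁻¹]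
            rw [this]
            exact hdown _ ih
        exact (Finset.mem_filter.1 this).1
      -- final contradiction
      obtain ⟨m, hm⟩ := Subgroup.mem_zpowers_iff.mp part1
      have hh'g : h' ≠ g := fun h => hh' (h ▸ Subgroup.mem_zpowers g)
      have hh'B : h' ∈ B :=
        Finset.mem_insert.2 (Or.inr (mem_subsums_of_mem ((Multiset.mem_erase_of_ne hh'g).2 hh'S)))
      have hzB : h' * g ^ m ∈ B := part2 h' hh'B hh' m
      have hz1 : h' * g ^ m ≠ 1 := by
        intro h1
        have h2 : h' = (g ^ m)⁻¹ := eq_inv_of_mul_eq_one_left h1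
        exact hh' (h2 ▸ inv_mem (zpow_mem (Subgroup.mem_zpowers g) m))
      have hzsub : h' * g ^ m ∈ subsums (S.erase g) := by
        rcases Finset.mem_insert.1 hzB with h1 | h2
        · exact absurd h1 hz1
        · exact h2
      have hzsubS : h' * g ^ m ∈ subsums S := subsums_mono (erase_le _ _) hzsub
      have hinv : h'⁻¹ ∈ subsums S := by
        rcases compl_mem_subsums hzsubS with heq | hmem
        · exfalso
          have h2 : h' * g ^ m = 1 * g ^ m := by rw [heq, ← hs, ← hm, one_mul]
          have h3 : h' = 1 := mul_right_cancel h2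
          exact hh' (h3 ▸ Subgroup.one_mem _)
        · have h4 : S.prod * (h' * g ^ m)⁻¹ = h'⁻¹ := by
            rw [← hs, ← hm]; group
          rwa [h4] at hmem
      rw [key h' hh'S] at hinv
      rcases Finset.mem_insert.1 hinv with heq | hmem
      · have h5 : h' ∈ Subgroup.zpowers g := by
          have h6 : h' = s⁻¹ := by rw [← heq]; group
          rw [h6, ← hm]
          exact inv_mem (zpow_mem (Subgroup.mem_zpowers g) m)
        exact hh' h5
      · rw [mem_subsums] at hmem
        obtain ⟨T, hT, hT0, hTp⟩ := hmem
        refine hz (h' ::ₘ T) (cons_le_of_le_erase hh'S hT) (by simp) ?_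
        rw [Multiset.prod_cons, hTp, mul_inv_cancel]

end Subsums


section P1

variable (n : ℕ)

abbrev AbG (n : ℕ) := Multiplicative (ZMod n) × Multiplicative (ZMod 2)

lemma AbG_pow_n (hev : Even n) (a : AbG n) : a ^ n = 1 := by
  obtain ⟨u, v⟩ := a
  have h1 : u ^ n = 1 := by
    apply Multiplicative.toAdd.injective
    rw [toAdd_pow, toAdd_one, nsmul_eq_mul, ZMod.natCast_self, zero_mul]
  have h2 : v ^ n = 1 := by
    apply Multiplicative.toAdd.injective
    rw [toAdd_pow, toAdd_one, nsmul_eq_mul]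
    have h2 : (n : ZMod 2) = 0 := by
      rw [ZMod.natCast_eq_zero_iff]
      exact hev.two_dvd
    rw [h2, zero_mul]
  have h3 : (u, v) ^ n = (u ^ n, v ^ n) := Prod.pow_mk _ _ _
  rw [h3, h1, h2]
  rfl

theorem P1 (hn : 2 ≤ n) (hev : Even n)
    (S : Multiset (AbG n)) (hcard : n + 1 ≤ Multiset.card S) :
    ∃ T : Multiset (AbG n), T ≤ S ∧ T ≠ 0 ∧ T.prod = 1 := by
  haveI : NeZero n := ⟨by omega⟩
  by_contra hcon
  push_neg at hcon
  have hz : ZSF S := fun T hT hT0 => hcon T hT hT0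
  by_cases hcyc : ∃ c : AbG n, ∀ y ∈ S, y ∈ Subgroup.zpowers c
  · obtain ⟨c, hc⟩ := hcyc
    classical
    set H := Subgroup.zpowers c with hH
    have hsub : (insert 1 (subsums S) : Finset (AbG n)) ⊆ (H : Set (AbG n)).toFinset := by
      intro a ha
      rw [Set.mem_toFinset]
      rcases Finset.mem_insert.1 ha with rfl | ha
      · exact Subgroup.one_mem _
      · rw [mem_subsums] at ha
        obtain ⟨T, hT, -, rfl⟩ := ha
        exact Subgroup.multiset_prod_mem _ T (fun y hy => hc y ((Multiset.subset_of_le hT) hy))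
    have h2 := Finset.card_le_card hsub
    rw [Set.toFinset_card] at h2
    have h3 : Fintype.card (H : Set (AbG n)) = orderOf c := by
      rw [← Fintype.card_zpowers]
      congr 1
    have h4 : orderOf c ∣ n := orderOf_dvd_of_pow_eq_one (AbG_pow_n n hev c)
    have h5 : orderOf c ≤ n := Nat.le_of_dvd (by omega) h4
    have h6 := card_le_card_subsums S hz
    rw [Finset.card_insert_of_notMem (one_not_mem_subsums hz)] at h2
    omega
  · have h1 := OW (Multiset.card S) S le_rfl hz hcyc
    have h2 : subsums S ⊆ Finset.univ.erase 1 := by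
      intro a ha
      exact Finset.mem_erase.2 ⟨fun h => one_not_mem_subsums hz (h ▸ ha), Finset.mem_univ a⟩
    have h3 := Finset.card_le_card h2
    rw [Finset.card_erase_of_mem (Finset.mem_univ 1)] at h3
    have h4 : Fintype.card (AbG n) = 2 * n := by
      simp [AbG, ZMod.card, mul_comm]
    rw [Finset.card_univ, h4] at h3
    omega

end P1

section Dihedral
variable {n : ℕ}

abbrev GG (n : ℕ) := DihedralGroup n × Multiplicative (ZMod 2)

def rotB : GG n → Bool := fun p => match p.1 with
  | DihedralGroup.r _ => true
  | DihedralGroup.sr _ => false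

def nu : GG n → AbG n := fun p => match h : p.1 with
  | DihedralGroup.r i => (Multiplicative.ofAdd i, p.2)
  | DihedralGroup.sr _ => 1

def iota : AbG n →* GG n where
  toFun := fun q => (DihedralGroup.r q.1.toAdd, q.2)
  map_one' := by
    refine Prod.ext ?_ rfl
    simp
  map_mul' := fun q q' => by
    refine Prod.ext ?_ rfl
    simp [DihedralGroup.r_mul_r]

lemma iota_nu {x : GG n} (hx : rotB x = true) : iota (nu x) = x := by
  obtain ⟨d, v⟩ := x
  cases d with
  | r i => rfl
  | sr i => simp [rotB] at hx

lemma refl_invol {x : GG n} (hx : rotB x = false) : x * x = 1 := by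
  obtain ⟨d, v⟩ := x
  cases d with
  | r i => simp [rotB] at hx
  | sr i =>
    refine Prod.ext ?_ ?_
    · show DihedralGroup.sr i * DihedralGroup.sr i = 1
      rw [DihedralGroup.sr_mul_sr, sub_self, DihedralGroup.one_def]
    · show v * v = 1
      apply Multiplicative.toAdd.injective
      rw [toAdd_mul, toAdd_one]
      exact CharTwo.add_self_eq_zero _

lemma refl_mul_refl_rot {x y : GG n} (hx : rotB x = false) (hy : rotB y = false) :
    rotB (x * y) = true := by
  obtain ⟨d, v⟩ := x
  obtain ⟨e, w⟩ := y
  cases d with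
  | r i => simp [rotB] at hx
  | sr i =>
    cases e with
    | r j => simp [rotB] at hy
    | sr j =>
      show rotB (DihedralGroup.sr i * DihedralGroup.sr j, v * w) = true
      rw [DihedralGroup.sr_mul_sr]
      rfl

def chain : List (GG n) → List (GG n)
  | t :: t' :: rest => (t * t') :: chain (t' :: rest)
  | _ => []

lemma chain_length : ∀ L : List (GG n), (chain L).length = L.length - 1
  | [] => rfl
  | [_] => rfl
  | t :: t' :: rest => by
    show (chain (t :: t' :: rest)).length = _
    rw [chain]
    simp only [List.length_cons, chain_length (t' :: rest), List.length_cons]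
    omega

lemma chain_mem : ∀ (L : List (GG n)), (∀ x ∈ L, rotB x = false) →
    ∀ y ∈ chain L, rotB y = true
  | [], _, y, hy => by simp [chain] at hy
  | [_], _, y, hy => by simp [chain] at hy
  | t :: t' :: rest, hL, y, hy => by
    rw [chain] at hy
    rcases List.mem_cons.1 hy with rfl | hy'
    · exact refl_mul_refl_rot (hL t (by simp)) (hL t' (by simp))
    · exact chain_mem (t' :: rest) (fun x hx => hL x (List.mem_cons_of_mem _ hx)) y hy'

/-- key chain-telescoping lemma -/
lemma chain_aux : ∀ (R : List (GG n)) (t : GG n), (∀ x ∈ t :: R, rotB x = false) →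
    ∀ c : List (GG n), c.Sublist (chain (t :: R)) →
    ((∃ lst : List (GG n), (lst : Multiset (GG n)) ≤ (R : Multiset (GG n)) ∧
        lst.prod = c.prod ∧ (c ≠ [] → lst ≠ [])) ∨
     (∃ tl : List (GG n), (tl : Multiset (GG n)) ≤ (R : Multiset (GG n)) ∧
        (t :: tl).prod = c.prod ∧ c ≠ []))
  | [], t, _, c, hc => by
    have : chain [t] = [] := rfl
    rw [this] at hc
    have hc0 : c = [] := List.sublist_nil.1 hc
    subst hc0
    exact Or.inl ⟨[], by simp, rfl, by simp⟩
  | t' :: R', t, hL, c, hc => by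
    have hch : chain (t :: t' :: R') = (t * t') :: chain (t' :: R') := rfl
    rw [hch] at hc
    have hL' : ∀ x ∈ t' :: R', rotB x = false := fun x hx => hL x (List.mem_cons_of_mem _ hx)
    cases hc with
    | cons _ h =>
      rcases chain_aux (R') t' hL' c h with ⟨lst, hle, hp, hne⟩ | ⟨tl, hle, hp, hne⟩
      · exact Or.inl ⟨lst, le_trans hle (by
          show (R' : Multiset (GG n)) ≤ (t' ::ₘ (R' : Multiset (GG n)))
          exact Multiset.le_cons_self _ _), hp, hne⟩
      · refine Or.inl ⟨t' :: tl, ?_, hp, by simp⟩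
        show t' ::ₘ (tl : Multiset (GG n)) ≤ t' ::ₘ (R' : Multiset (GG n))
        exact Multiset.cons_le_cons _ hle
    | @cons_cons l₁ l₂ a h =>
      rcases chain_aux R' t' hL' l₁ h with ⟨lst, hle, hp, hne⟩ | ⟨tl, hle, hp, hne⟩
      · refine Or.inr ⟨t' :: lst, ?_, ?_, by simp⟩
        · show t' ::ₘ (lst : Multiset (GG n)) ≤ t' ::ₘ (R' : Multiset (GG n))
          exact Multiset.cons_le_cons _ hle
        · rw [List.prod_cons, List.prod_cons, List.prod_cons, hp, ← mul_assoc]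
      · refine Or.inr ⟨tl, le_trans hle (Multiset.le_cons_self _ _), ?_, by simp⟩
        have hinv := refl_invol (hL' t' (by simp))
        rw [List.prod_cons, List.prod_cons, ← hp, List.prod_cons, mul_assoc t t',
          ← mul_assoc t' t', hinv, one_mul]

/-- wrapper: any sublist of the chain of a reflection list can be realized as an
ordered product of a sub-multiset of the reflections -/
lemma chain_sub (L : List (GG n)) (hL : ∀ x ∈ L, rotB x = false)
    (c : List (GG n)) (hc : c.Sublist (chain L)) :
    ∃ lst : List (GG n), (lst : Multiset (GG n)) ≤ (L : Multiset (GG n)) ∧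
      lst.prod = c.prod ∧ (c ≠ [] → lst ≠ []) := by
  cases L with
  | nil =>
    have : chain ([] : List (GG n)) = [] := rfl
    rw [this] at hc
    have hc0 := List.sublist_nil.1 hc
    subst hc0
    exact ⟨[], by simp, rfl, by simp⟩
  | cons t R =>
    rcases chain_aux R t hL c hc with ⟨lst, hle, hp, hne⟩ | ⟨tl, hle, hp, hne⟩
    · exact ⟨lst, le_trans hle (by
        show (R : Multiset (GG n)) ≤ (t ::ₘ (R : Multiset (GG n)))
        exact Multiset.le_cons_self _ _), hp, hne⟩
    · refine ⟨t :: tl, ?_, hp, by simp⟩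
      show t ::ₘ (tl : Multiset (GG n)) ≤ t ::ₘ (R : Multiset (GG n))
      exact Multiset.cons_le_cons _ hle

end Dihedral

section Upper
variable {n : ℕ}

lemma sublist_of_map {α β : Type*} {f : α → β} :
    ∀ {l : List α} {u : List β}, u.Sublist (l.map f) → ∃ v : List α, v.Sublist l ∧ u = v.map f := by
  intro l
  induction l with
  | nil =>
    intro u h
    simp only [List.map_nil, List.sublist_nil] at h
    exact ⟨[], by simp, by simp [h]⟩
  | cons a l ih =>
    intro u h
    rw [List.map_cons] at h
    cases h with
    | cons _ h' =>
      obtain ⟨v, hv, rfl⟩ := ih h'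
      exact ⟨v, List.Sublist.cons a hv, rfl⟩
    | @cons_cons l₁ l₂ b h' =>
      obtain ⟨v, hv, rfl⟩ := ih h'
      exact ⟨a :: v, List.Sublist.cons₂ a hv, by simp⟩

theorem upper_bound (hn : 4 ≤ n) (hev : Even n)
    (S : Multiset (GG n)) (hcard : n + 2 ≤ Multiset.card S) :
    ∃ T : Multiset (GG n), T ≤ S ∧ T ≠ 0 ∧ IsProductOne T := by
  classical
  set Srot := S.filter (fun p => rotB p = true) with hSrot
  set Sref := S.filter (fun p => ¬ rotB p = true) with hSref
  have hsplit : Srot + Sref = S := Multiset.filter_add_not _ S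
  set L := Sref.toList with hLdef
  have hLmem : ∀ x ∈ L, rotB x = false := by
    intro x hx
    have h1 : x ∈ Sref := by rwa [hLdef, Multiset.mem_toList] at hx
    have h2 := Multiset.of_mem_filter h1
    simpa using h2
  set Wl : List (AbG n) := Srot.toList.map nu ++ (chain L).map nu with hWl
  have hWlen : n + 1 ≤ Wl.length := by
    have hc : Multiset.card Srot + Multiset.card Sref = Multiset.card S := by
      rw [← hsplit, Multiset.card_add]
    rw [hWl]
    simp only [List.length_append, List.length_map]
    rw [Multiset.length_toList, chain_length, hLdef, Multiset.length_toList]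
    omega
  obtain ⟨T, hTle, hT0, hTp⟩ := P1 n (by omega) hev (↑Wl) (by simpa using hWlen)
  have hTle' : (↑T.toList : Multiset (AbG n)) ≤ ↑Wl := by
    rwa [Multiset.coe_toList]
  obtain ⟨u, huperm, husub⟩ := Multiset.coe_le.1 hTle'
  have huT : (↑u : Multiset (AbG n)) = T := by
    rw [Multiset.coe_eq_coe.2 huperm, Multiset.coe_toList]
  rw [hWl] at husub
  obtain ⟨u1, u2, rfl, h1sub, h2sub⟩ := List.sublist_append_iff.1 husub
  obtain ⟨r1, hr1sub, rfl⟩ := sublist_of_map h1sub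
  obtain ⟨c2, hc2sub, rfl⟩ := sublist_of_map h2sub
  obtain ⟨lst, hlle, hlprod, hlne⟩ := chain_sub L hLmem c2 hc2sub
  have hrot1 : ∀ x ∈ r1, rotB x = true := by
    intro x hx
    have h1 : x ∈ Srot := by
      rw [← Multiset.mem_toList]
      exact hr1sub.subset hx
    simpa using Multiset.of_mem_filter h1
  have hchrot : ∀ x ∈ c2, rotB x = true := fun x hx =>
    chain_mem L hLmem x (hc2sub.subset hx)
  -- push products through iota
  have hprod_u : (r1.map nu).prod * (c2.map nu).prod = 1 := by
    have : ((r1.map nu) ++ (c2.map nu)).prod = 1 := by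
      have := hTp
      rw [← huT] at this
      simpa using this
    simpa [List.prod_append] using this
  have hiota1 : iota ((r1.map nu).prod) = r1.prod := by
    rw [MonoidHom.map_list_prod, List.map_map]
    congr 1
    have : r1.map (iota ∘ nu) = r1.map id := List.map_congr_left (fun x hx => iota_nu (hrot1 x hx))
    rw [this, List.map_id]
  have hiota2 : iota ((c2.map nu).prod) = c2.prod := by
    rw [MonoidHom.map_list_prod, List.map_map]
    congr 1
    have : c2.map (iota ∘ nu) = c2.map id := List.map_congr_left (fun x hx => iota_nu (hchrot x hx))
    rw [this, List.map_id]
  have hGprod : r1.prod * c2.prod = 1 := by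
    rw [← hiota1, ← hiota2, ← MonoidHom.map_mul, hprod_u, MonoidHom.map_one]
  set fl := r1 ++ lst with hfl
  have hflprod : fl.prod = 1 := by
    rw [hfl, List.prod_append, hlprod, hGprod]
  have hflle : (↑fl : Multiset (GG n)) ≤ S := by
    rw [hfl, ← hsplit]
    have ha : (↑r1 : Multiset (GG n)) ≤ Srot := by
      have := Multiset.coe_le.2 hr1sub.subperm
      rwa [Multiset.coe_toList] at this
    have hb : (↑lst : Multiset (GG n)) ≤ Sref := by
      have := hlle
      rwa [hLdef, Multiset.coe_toList] at this
    have : (↑(r1 ++ lst) : Multiset (GG n)) = ↑r1 + ↑lst := by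
      simp
    rw [this]
    exact add_le_add ha hb
  have hflne : fl ≠ [] := by
    rw [hfl]
    intro h0
    obtain ⟨h0r, h0l⟩ := List.append_eq_nil_iff.1 h0
    have hc2 : c2 = [] := by
      by_contra hc2ne
      exact (hlne hc2ne) h0l
    apply hT0
    rw [← huT]
    simp [h0r, hc2]
  exact ⟨↑fl, hflle, by simpa using hflne, ⟨fl, rfl, hflprod⟩⟩

end Upper

section Lower
variable {n : ℕ}

/-- parity homomorphism of the dihedral group -/
def par : DihedralGroup n →* Multiplicative (ZMod 2) where
  toFun := fun g => match g with
    | DihedralGroup.r _ => 1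
    | DihedralGroup.sr _ => Multiplicative.ofAdd 1
  map_one' := by
    rw [DihedralGroup.one_def]
  map_mul' := by
    rintro (i | i) (j | j)
    · rw [DihedralGroup.r_mul_r]; show (1:Multiplicative (ZMod 2)) = 1 * 1; rw [mul_one]
    · rw [DihedralGroup.r_mul_sr]; show Multiplicative.ofAdd 1 = 1 * Multiplicative.ofAdd 1; rw [one_mul]
    · rw [DihedralGroup.sr_mul_r]; show Multiplicative.ofAdd 1 = Multiplicative.ofAdd 1 * 1; rw [mul_one]
    · rw [DihedralGroup.sr_mul_sr]
      show (1:Multiplicative (ZMod 2)) = Multiplicative.ofAdd 1 * Multiplicative.ofAdd 1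
      decide

theorem lower_bound (hn : 4 ≤ n) :
    ∃ S : Multiset (GG n), Multiset.card S = n + 1 ∧ ProductOneFree S := by
  haveI : NeZero n := ⟨by omega⟩
  haveI : Fact (1 < n) := ⟨by omega⟩
  set a1 : GG n := (DihedralGroup.r 1, 1) with ha1
  set a2 : GG n := (DihedralGroup.sr 0, 1) with ha2
  set a3 : GG n := (1, Multiplicative.ofAdd (1 : ZMod 2)) with ha3
  have ha12 : a1 ≠ a2 := by
    simp [ha1, ha2, Prod.ext_iff]
  have hx12 : (1 : Multiplicative (ZMod 2)) ≠ Multiplicative.ofAdd 1 := by decide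
  have ha13 : a1 ≠ a3 := fun h => hx12 (congrArg Prod.snd h)
  have ha23 : a2 ≠ a3 := fun h => hx12 (congrArg Prod.snd h)
  have h21 : a2 ≠ a1 := Ne.symm ha12
  have h31 : a3 ≠ a1 := Ne.symm ha13
  have h32 : a3 ≠ a2 := Ne.symm ha23
  refine ⟨replicate (n-1) a1 + (a2 ::ₘ a3 ::ₘ 0), by simp; omega, ?_⟩
  set S₀ : Multiset (GG n) := replicate (n-1) a1 + (a2 ::ₘ a3 ::ₘ 0) with hS₀
  rintro T hle hne ⟨l, hl, hp⟩
  have hmemS : ∀ x ∈ T, x = a1 ∨ x = a2 ∨ x = a3 := by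
    intro x hx
    have hx2 := Multiset.mem_of_le hle hx
    rw [hS₀] at hx2
    simp only [Multiset.mem_add, Multiset.mem_replicate, Multiset.mem_cons,
      Multiset.notMem_zero, or_false] at hx2
    tauto
  have hcount := fun x => Multiset.count_le_of_le x hle
  have hcS1 : count a1 S₀ = n - 1 := by
    rw [hS₀, count_add, count_replicate, if_pos rfl, count_cons_of_ne ha12, count_cons_of_ne ha13,
      count_zero, add_zero]
  have hcS2 : count a2 S₀ = 1 := by
    rw [hS₀, count_add, count_replicate, if_neg ha12, count_cons_self, count_cons_of_ne ha23,
      count_zero, zero_add, zero_add]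
  have hcS3 : count a3 S₀ = 1 := by
    rw [hS₀, count_add, count_replicate, if_neg ha13, count_cons_of_ne h32, count_cons_self,
      count_zero, zero_add, zero_add]
  set c1 := count a1 T with hc1d
  set c2 := count a2 T with hc2d
  set c3 := count a3 T with hc3d
  have hc1 : c1 ≤ n - 1 := hcS1 ▸ hcount a1
  have hc2 : c2 ≤ 1 := hcS2 ▸ hcount a2
  have hc3 : c3 ≤ 1 := hcS3 ▸ hcount a3
  have hTeq : T = replicate c1 a1 + (replicate c2 a2 + replicate c3 a3) := by
    ext x
    rw [count_add, count_add, count_replicate, count_replicate, count_replicate]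
    rcases eq_or_ne x a1 with rfl | h1
    · rw [if_pos rfl, ← hc1d]
      rw [if_neg h21, if_neg h31]
      simp
    · rcases eq_or_ne x a2 with rfl | h2
      · rw [if_pos rfl, ← hc2d]
        rw [if_neg ha12, if_neg h32]
        simp
      · rcases eq_or_ne x a3 with rfl | h3
        · rw [if_pos rfl, ← hc3d]
          rw [if_neg ha13, if_neg ha23]
          simp
        · rw [if_neg (Ne.symm h1), if_neg (Ne.symm h2), if_neg (Ne.symm h3)]
          have : x ∉ T := fun hx => by rcases hmemS x hx with rfl | rfl | rfl <;> simp at h1 h2 h3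
          simp [Multiset.count_eq_zero.2 this]
  -- second/parity coordinates
  set x2 : Multiplicative (ZMod 2) := Multiplicative.ofAdd 1 with hx2d
  set ψ : GG n →* Multiplicative (ZMod 2) × Multiplicative (ZMod 2) :=
    MonoidHom.prod (par.comp (MonoidHom.fst _ _)) (MonoidHom.snd _ _) with hψ
  have hψprod : (Multiset.map ψ T).prod = 1 := by
    rw [← hl, Multiset.map_coe, Multiset.prod_coe, ← MonoidHom.map_list_prod, hp, map_one]
  have hψa1 : ψ a1 = 1 := rfl
  have hψa2 : ψ a2 = (x2, 1) := rfl
  have hψa3 : ψ a3 = (1, x2) := rfl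
  rw [hTeq, Multiset.map_add, Multiset.map_add, Multiset.map_replicate, Multiset.map_replicate,
    Multiset.map_replicate, Multiset.prod_add, Multiset.prod_add, Multiset.prod_replicate,
    Multiset.prod_replicate, Multiset.prod_replicate, hψa1, hψa2, hψa3, one_pow, one_mul] at hψprod
  have hpow2 : ∀ c : ℕ, (x2 ^ c = 1) → c % 2 = 0 := by
    intro c hc
    have h1 : ((c : ZMod 2)) = 0 := by
      have h2 : (x2 ^ c).toAdd = (0 : ZMod 2) := by rw [hc]; rfl
      rw [toAdd_pow] at h2
      have h3 : x2.toAdd = (1 : ZMod 2) := rfl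
      rw [h3, nsmul_eq_mul, mul_one] at h2
      exact h2
    have := (ZMod.natCast_eq_zero_iff c 2).1 h1
    omega
  have hc2z : c2 = 0 := by
    have hfst := congrArg Prod.fst hψprod
    have h4 : ((x2, (1:Multiplicative (ZMod 2))) ^ c2 * ((1:Multiplicative (ZMod 2)), x2) ^ c3).1
        = x2 ^ c2 := by
      rw [Prod.fst_mul, Prod.pow_fst, Prod.pow_fst]
      simp
    rw [h4] at hfst
    have := hpow2 c2 hfst
    omega
  have hc3z : c3 = 0 := by
    have hsnd := congrArg Prod.snd hψprod
    have h4 : ((x2, (1:Multiplicative (ZMod 2))) ^ c2 * ((1:Multiplicative (ZMod 2)), x2) ^ c3).2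
        = x2 ^ c3 := by
      rw [Prod.snd_mul, Prod.pow_snd, Prod.pow_snd]
      simp
    rw [h4] at hsnd
    have := hpow2 c3 hsnd
    omega
  have hTrep : T = replicate c1 a1 := by
    rw [hTeq, hc2z, hc3z]
    simp
  -- now l is a replicate list
  have hlrep : l = List.replicate c1 a1 := by
    have hlen : l.length = c1 := by
      have h5 := congrArg Multiset.card hl
      rw [hTrep] at h5
      simpa using h5
    rw [← hlen]
    refine List.eq_replicate_length.2 ?_
    intro b hb
    have hbT : b ∈ T := by rw [← hl]; exact hb
    rw [hTrep] at hbT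
    exact Multiset.eq_of_mem_replicate hbT
  rw [hlrep, List.prod_replicate] at hp
  have hfst := congrArg Prod.fst hp
  rw [Prod.pow_fst] at hfst
  have hfst2 : (DihedralGroup.r 1 : DihedralGroup n) ^ c1 = 1 := hfst
  rw [DihedralGroup.r_one_pow, DihedralGroup.one_def] at hfst2
  have hzero : ((c1 : ZMod n)) = 0 := by
    exact DihedralGroup.r.inj hfst2
  have hdvd := (ZMod.natCast_eq_zero_iff c1 n).1 hzero
  have hc1z : c1 = 0 := by
    rcases Nat.eq_zero_or_pos c1 with h | h
    · exact h
    · have := Nat.le_of_dvd h hdvd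
      omega
  apply hne
  rw [hTrep, hc1z]
  rfl

end Lower

theorem stmt_13 (n : ℕ) (hn : 4 ≤ n) (hev : Even n) :
    smallDavenport (DihedralGroup n × Multiplicative (ZMod 2)) = n + 1 := by
  have hub : ∀ k ∈ {k : ℕ | ∃ S : Multiset (GG n), Multiset.card S = k ∧ ProductOneFree S},
      k ≤ n + 1 := by
    rintro k ⟨S, hcS, hfree⟩
    by_contra hk
    push_neg at hk
    obtain ⟨T, hle, hne, hpo⟩ := upper_bound hn hev S (by omega)
    exact hfree T hle hne hpo
  obtain ⟨S₀, hcS₀, hfree₀⟩ := lower_bound hn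
  have hmem : (n+1) ∈ {k : ℕ | ∃ S : Multiset (GG n), Multiset.card S = k ∧ ProductOneFree S} :=
    ⟨S₀, hcS₀, hfree₀⟩
  apply le_antisymm
  · exact csSup_le ⟨n+1, hmem⟩ hub
  · exact le_csSup ⟨n+1, hub⟩ hmem
end
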